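/- Place N balls independently and uniformly at random into M boxes (M ≥ 3). Then the probability that every box contains at least one ball is at most exp(−(M/2)·exp(−4N/M)). -/

import Mathlib

open Finset

def ballsS (N m : ℕ) : ℕ :=
  (Finset.univ.filter fun f : Fin N → Fin m => Function.Surjective f).card

lemma ballsS_le (N m : ℕ) : ballsS N m ≤ m ^ N := by
  have h := Finset.card_filter_le (Finset.univ : Finset (Fin N → Fin m))
    (fun f => Function.Surjective f)
  simpa [ballsS, Fintype.card_fun] using h

lemma ballsT_card (N m : ℕ) :
    (Finset.univ.filter fun k : Fin N → Fin (m+1) => ∃ i, k i = Fin.last m).card + m ^ N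
      = (m+1) ^ N := by
  have h := Finset.card_filter_add_card_filter_not
    (s := (Finset.univ : Finset (Fin N → Fin (m+1))))
    (p := fun k => ∃ i, k i = Fin.last m)
  have h2 : (Finset.univ.filter fun k : Fin N → Fin (m+1) => ¬ ∃ i, k i = Fin.last m).card
      = m ^ N := by
    have := Finset.card_bij
      (s := (Finset.univ : Finset (Fin N → Fin m)))
      (t := Finset.univ.filter fun k : Fin N → Fin (m+1) => ¬ ∃ i, k i = Fin.last m)
      (fun g _ => fun i => (g i).castSucc)
      (by
        intro g _
        simp only [Finset.mem_filter, Finset.mem_univ, true_and, not_exists]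
        intro i
        exact (Fin.castSucc_lt_last (g i)).ne)
      (by
        intro g _ g' _ h
        funext i
        exact Fin.castSucc_injective _ (congrFun h i))
      (by
        intro k hk
        simp only [Finset.mem_filter, Finset.mem_univ, true_and, not_exists] at hk
        refine ⟨fun i => (k i).castPred (hk i), Finset.mem_univ _, ?_⟩
        funext i
        exact Fin.castSucc_castPred (k i) (hk i))
    rw [← this]
    simp [Fintype.card_fun]
  rw [← h2]
  rw [h]
  simp [Fintype.card_fun]

lemma balls_key (N m : ℕ) :
    ballsS N (m+1) * m ^ N ≤
      ballsS N m *
        (Finset.univ.filter fun k : Fin N → Fin (m+1) => ∃ i, k i = Fin.last m).card := by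
  classical
  rw [ballsS, ballsS]
  have hm : m ^ N = (Finset.univ : Finset (Fin N → Fin m)).card := by
    simp [Fintype.card_fun]
  rw [hm, ← Finset.card_product, ← Finset.card_product]
  apply Finset.card_le_card_of_injOn
    (fun fh => (fun i => if h : fh.1 i = Fin.last m then fh.2 i else (fh.1 i).castPred h,
                fun i => if fh.1 i = Fin.last m then Fin.last m else (fh.2 i).castSucc))
  · rintro ⟨f, h⟩ hmem
    simp only [Finset.mem_coe, Finset.mem_product, Finset.mem_filter, Finset.mem_univ, true_and, and_true] at hmem ⊢
    constructor
    · intro y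
      obtain ⟨i, hi⟩ := hmem y.castSucc
      refine ⟨i, ?_⟩
      have hne : f i ≠ Fin.last m := by
        rw [hi]; exact (Fin.castSucc_lt_last y).ne
      simp only [dif_neg hne]
      simp [hi]
    · obtain ⟨i, hi⟩ := hmem (Fin.last m)
      exact ⟨i, by simp [hi]⟩
  · rintro ⟨f, h⟩ hmem ⟨f', h'⟩ hmem' heq
    simp only [Prod.mk.injEq] at heq
    obtain ⟨hg, hk⟩ := heq
    have hff' : ∀ i, f i = f' i ∧ h i = h' i := by
      intro i
      have hgi := congrFun hg i
      have hki := congrFun hk i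
      by_cases h1 : f i = Fin.last m <;> by_cases h2 : f' i = Fin.last m <;>
        simp only [h1, h2, dif_pos, dif_neg, if_pos, if_neg, dite_true, dite_false,
          ite_true, ite_false] at hgi hki
      · exact ⟨h1.trans h2.symm, hgi⟩
      · exact absurd hki.symm (Fin.castSucc_lt_last (h' i)).ne
      · exact absurd hki (Fin.castSucc_lt_last (h i)).ne
      · refine ⟨?_, Fin.castSucc_injective _ hki⟩
        have := congrArg Fin.castSucc hgi
        rwa [Fin.castSucc_castPred, Fin.castSucc_castPred] at this
    exact Prod.ext (funext fun i => (hff' i).1) (funext fun i => (hff' i).2)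

lemma balls_step (N m : ℕ) (hm : 1 ≤ m) :
    (ballsS N (m+1) : ℝ) / ((m:ℝ)+1)^N ≤
      (ballsS N m : ℝ) / (m:ℝ)^N * (1 - ((m:ℝ)/((m:ℝ)+1))^N) := by
  have hm0 : (0:ℝ) < m := by exact_mod_cast hm
  have hP : (0:ℝ) < (m:ℝ)^N := by positivity
  have hQ : (0:ℝ) < ((m:ℝ)+1)^N := by positivity
  have hT : ((Finset.univ.filter fun k : Fin N → Fin (m+1) =>
      ∃ i, k i = Fin.last m).card : ℝ) = ((m:ℝ)+1)^N - (m:ℝ)^N := by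
    have h2 := ballsT_card N m
    have := congrArg (Nat.cast (R := ℝ)) h2
    push_cast at this
    linarith
  have hkey : (ballsS N (m+1) : ℝ) * (m:ℝ)^N ≤
      (ballsS N m : ℝ) * (((m:ℝ)+1)^N - (m:ℝ)^N) := by
    have h1 := balls_key N m
    have := (Nat.cast_le (α := ℝ)).2 h1
    push_cast at this
    rw [hT] at this
    convert this using 2 <;> push_cast <;> ring
  have hfac : (1:ℝ) - ((m:ℝ)/((m:ℝ)+1))^N = (((m:ℝ)+1)^N - (m:ℝ)^N)/(((m:ℝ)+1)^N) := by
    rw [sub_div, div_self hQ.ne', div_pow]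
  rw [hfac, div_mul_div_comm, div_le_div_iff₀ hQ (by positivity)]
  nlinarith [mul_le_mul_of_nonneg_right hkey hQ.le, hkey, hP.le, hQ.le]

lemma balls_iter (N : ℕ) (r : ℝ) (hr : 0 ≤ r) (K : ℕ) :
    ∀ m : ℕ, 1 ≤ m → (∀ j : ℕ, m ≤ j → j < m + K → 1 - ((j:ℝ)/((j:ℝ)+1))^N ≤ r) →
    (ballsS N (m+K) : ℝ) / ((m+K : ℕ):ℝ)^N ≤ r ^ K := by
  induction K with
  | zero =>
    intro m hm _
    rw [pow_zero]
    apply div_le_one_of_le₀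
    · exact_mod_cast ballsS_le N m
    · positivity
  | succ K ih =>
    intro m hm hj
    have hstep := balls_step N (m+K) (by omega)
    have hfac_nonneg : (0:ℝ) ≤ 1 - (((m+K:ℕ):ℝ)/(((m+K:ℕ):ℝ)+1))^N := by
      have h1 : ((m+K:ℕ):ℝ)/(((m+K:ℕ):ℝ)+1) ≤ 1 := by
        rw [div_le_one (by positivity)]; linarith
      have := pow_le_one₀ (n := N) (by positivity : (0:ℝ) ≤ ((m+K:ℕ):ℝ)/(((m+K:ℕ):ℝ)+1)) h1
      linarith
    have hr' := hj (m+K) (by omega) (by omega)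
    have ihh := ih m hm (fun j h1 h2 => hj j h1 (by omega))
    have step2 : (ballsS N (m+(K+1)) : ℝ) / ((m+(K+1) : ℕ):ℝ)^N ≤
        (ballsS N (m+K) : ℝ) / ((m+K:ℕ):ℝ)^N * (1 - (((m+K:ℕ):ℝ)/(((m+K:ℕ):ℝ)+1))^N) := by
      have : m + (K+1) = (m+K) + 1 := rfl
      rw [this]
      convert hstep using 3 <;> push_cast <;> ring
    calc (ballsS N (m+(K+1)) : ℝ) / ((m+(K+1) : ℕ):ℝ)^N
        ≤ (ballsS N (m+K) : ℝ) / ((m+K:ℕ):ℝ)^N * (1 - (((m+K:ℕ):ℝ)/(((m+K:ℕ):ℝ)+1))^N) :=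
          step2
      _ ≤ r ^ K * r := mul_le_mul ihh hr' hfac_nonneg (pow_nonneg hr K)
      _ = r ^ (K+1) := (pow_succ r K).symm

lemma balls_exp_bound (M : ℕ) (hM : 3 ≤ M) :
    Real.exp (-(4/(M:ℝ))) ≤ 1 - 2/(M:ℝ) := by
  have hM0 : (0:ℝ) < M := by exact_mod_cast (by omega : 0 < M)
  set u : ℝ := 4/(M:ℝ) with hu_def
  have hu0 : 0 < u := by positivity
  have hu2 : u^2 ≤ 2 := by
    have hM3 : (3:ℝ) ≤ M := by exact_mod_cast hM
    rw [hu_def, div_pow]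
    rw [div_le_iff₀ (by positivity)]
    nlinarith
  have hexp : 1 + u + u^2/2 ≤ Real.exp u := by
    have h := Real.sum_le_exp_of_nonneg hu0.le 3
    norm_num [Finset.sum_range_succ, Nat.factorial] at h
    linarith
  have hpos : (0:ℝ) < 1 + u + u^2/2 := by positivity
  have h1 : Real.exp (-u) ≤ 1/(1+u+u^2/2) := by
    rw [Real.exp_neg]
    have := one_div_le_one_div_of_le hpos hexp
    simpa [one_div] using this
  refine h1.trans ?_
  have h2M : 2/(M:ℝ) = u/2 := by rw [hu_def]; ring
  rw [h2M, div_le_iff₀ hpos]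
  nlinarith [mul_le_mul_of_nonneg_left hu2 hu0.le]

/-- Place `N` balls independently and uniformly at random into `M` boxes
(`M ≥ 3`). The probability that every box contains at least one ball (i.e.
the proportion of surjective maps `Fin N → Fin M`) is at most
`exp(-(M/2) exp(-4N/M))`. -/
theorem balls_in_boxes_surjective_prob
    (N M : ℕ) (hM : 3 ≤ M) :
    ((Finset.univ.filter fun f : Fin N → Fin M => Function.Surjective f).card : ℝ) /
        (M : ℝ) ^ N ≤
      Real.exp (-((M : ℝ) / 2) * Real.exp (-4 * (N : ℝ) / M)) := by
  have hM0 : (0:ℝ) < M := by exact_mod_cast (by omega : 0 < M)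
  set E : ℝ := Real.exp (-4 * (N:ℝ) / M) with hE_def
  have hE0 : 0 < E := Real.exp_pos _
  have hE1 : E ≤ 1 := by
    rw [hE_def, ← Real.exp_zero]
    apply Real.exp_le_exp.2
    have h : (0:ℝ) ≤ 4 * (N:ℝ) / M := by positivity
    have : -4 * (N:ℝ) / M = -(4 * (N:ℝ) / M) := by ring
    rw [this]
    linarith
  set r : ℝ := 1 - E with hr_def
  have hr : 0 ≤ r := by simp [hr_def]; linarith
  have hmK : M/2 + (M - M/2) = M := by omega
  have hiter := balls_iter N r hr (M - M/2) (M/2) (by omega) ?_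
  · rw [hmK] at hiter
    have hrE : r ≤ Real.exp (-E) := by
      have := Real.add_one_le_exp (-E)
      rw [hr_def]; linarith
    have h2 : r ^ (M - M/2) ≤ Real.exp (-E) ^ (M - M/2) :=
      pow_le_pow_left₀ hr hrE _
    have h3 : Real.exp (-E) ^ (M - M/2) = Real.exp (((M - M/2 : ℕ):ℝ) * (-E)) := by
      rw [Real.exp_nat_mul]
    have hKge : (M:ℝ)/2 ≤ ((M - M/2 : ℕ):ℝ) := by
      have h4 : ((M - M/2 : ℕ):ℝ) = (M:ℝ) - ((M/2 : ℕ):ℝ) := by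
        push_cast [Nat.cast_sub (Nat.div_le_self M 2)]; ring
      have h5 : ((M/2 : ℕ):ℝ) ≤ (M:ℝ)/2 := Nat.cast_div_le
      rw [h4]; linarith
    have h6 : Real.exp (((M - M/2 : ℕ):ℝ) * (-E)) ≤ Real.exp (-((M:ℝ)/2) * E) := by
      apply Real.exp_le_exp.2
      nlinarith
    have final : (ballsS N M : ℝ) / (M:ℝ)^N ≤ Real.exp (-((M:ℝ)/2) * E) :=
      hiter.trans (h2.trans (h3 ▸ h6))
    exact final
  · -- the factor bound
    intro j hj1 hj2
    have hj0 : (0:ℝ) < j := by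
      have : 1 ≤ j := le_trans (by omega) hj1
      exact_mod_cast this
    have hEpow : E = (Real.exp (-(4/(M:ℝ))))^N := by
      rw [← Real.exp_nat_mul, hE_def]
      congr 1
      ring
    have hchain : Real.exp (-(4/(M:ℝ))) ≤ (j:ℝ)/((j:ℝ)+1) := by
      refine (balls_exp_bound M hM).trans ?_
      have hMle : (M:ℝ) ≤ 2*((j:ℝ)+1) := by
        have : M ≤ 2*(j+1) := by omega
        exact_mod_cast this
      have h7 : 1/((j:ℝ)+1) ≤ 2/(M:ℝ) := by
        rw [div_le_div_iff₀ (by positivity) hM0]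
        linarith
      have h8 : (j:ℝ)/((j:ℝ)+1) = 1 - 1/((j:ℝ)+1) := by
        field_simp
        ring
      rw [h8]
      linarith
    have h9 : E ≤ ((j:ℝ)/((j:ℝ)+1))^N := by
      rw [hEpow]
      exact pow_le_pow_left₀ (Real.exp_nonneg _) hchain N
    linarith
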